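/- Fix T > 0 and λ ∈ ℂ, and let v ∈ C^∞[0,1] solve the dual eigenvalue equation −(1−ρ²)v''(ρ) − (2(1−ρ²)/ρ)v'(ρ) + 2λρv'(ρ) + (Ṽ(ρ)/ρ²)v(ρ) + λ(λ+1)v(ρ) = 0 on (0,1), with Ṽ(ρ) = (6−2ρ²)/(1+ρ²), and assume v(ρ)/ρ² extends continuously to [0,1]. Define χ(t,r) := (T−t)^{−λ} v(r/(T−t)) for 0 < t < T, 0 < r ≤ T−t. Then χ satisfies χ_tt − χ_rr − (2/r)χ_r + Ṽ(r/(T−t)) r^{-2} χ = 0, and the function F(t) := (1/2)∫₀^{T−t} [ r²|χ_t(t,r)|² + r²|χ_r(t,r)|² + Ṽ(r/(T−t))|χ(t,r)|² ] dr satisfies F'(t) ≤ −|χ(t,T−t)|² = −(T−t)^{−2 Re λ} |v(1)|² for all t ∈ (0,T). -/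

import Mathlib

open Set Complex


/-- The dual potential `Ṽ(ρ) = (6−2ρ²)/(1+ρ²)`. -/
noncomputable def Vdual (ρ : ℝ) : ℝ := (6 - 2 * ρ ^ 2) / (1 + ρ ^ 2)

/-- The function `χ(t,r) = (T−t)^{−λ} v(r/(T−t))`. -/
noncomputable def chiF (T : ℝ) (lam : ℂ) (v : ℝ → ℂ) (t r : ℝ) : ℂ :=
  ((T - t : ℝ) : ℂ) ^ (-lam) * v (r / (T - t))

/-- The energy-type functional
`F(t) = (1/2)∫₀^{T−t} [r²|χ_t|² + r²|χ_r|² + Ṽ(r/(T−t))|χ|²] dr`. -/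
noncomputable def Ffun (T : ℝ) (lam : ℂ) (v : ℝ → ℂ) (t : ℝ) : ℝ :=
  (1/2) * ∫ r in (0:ℝ)..(T - t),
    (r ^ 2 * ‖deriv (fun s => chiF T lam v s r) t‖ ^ 2
      + r ^ 2 * ‖deriv (fun y => chiF T lam v t y) r‖ ^ 2
      + Vdual (r / (T - t)) * ‖chiF T lam v t r‖ ^ 2)

lemma st14_one_add_sq_pos (x : ℝ) : (0:ℝ) < 1 + x ^ 2 := by positivity

lemma st14_vdual_hasDerivAt (x : ℝ) :
    HasDerivAt Vdual (-16 * x / (1 + x ^ 2) ^ 2) x := by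
  have h1 : HasDerivAt (fun x : ℝ => 6 - 2 * x ^ 2) (-(4 * x)) x := by
    simpa using ((hasDerivAt_pow 2 x).const_mul (2:ℝ)).const_sub 6 |>.congr_deriv (by ring)
  have h2 : HasDerivAt (fun x : ℝ => 1 + x ^ 2) (2 * x) x := by
    simpa using (hasDerivAt_pow 2 x).const_add 1
  have := h1.div h2 (st14_one_add_sq_pos x).ne'
  refine this.congr_deriv ?_
  ring

lemma st14_vdual_cont : Continuous Vdual := by
  apply Continuous.div (by continuity) (by continuity)
  exact fun x => (st14_one_add_sq_pos x).ne'

lemma st14_vdual_one : Vdual 1 = 2 := by norm_num [Vdual]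

noncomputable def st14V1 (v : ℝ → ℂ) : ℝ → ℂ := derivWithin v (Set.Icc 0 1)

lemma st14_V1_eq (v : ℝ → ℂ) {x : ℝ} (hx : x ∈ Set.Ioo (0:ℝ) 1) :
    st14V1 v x = deriv v x :=
  derivWithin_of_mem_nhds (Icc_mem_nhds hx.1 hx.2)

lemma st14_contV1 {v : ℝ → ℂ} (hv : ContDiffOn ℝ (⊤ : ℕ∞) v (Set.Icc 0 1)) :
    ContinuousOn (st14V1 v) (Set.Icc 0 1) :=
  hv.continuousOn_derivWithin (uniqueDiffOn_Icc (by norm_num)) (by simp)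

lemma st14_hasDerivAt_v {v : ℝ → ℂ} (hv : ContDiffOn ℝ (⊤ : ℕ∞) v (Set.Icc 0 1))
    {x : ℝ} (hx : x ∈ Set.Ioo (0:ℝ) 1) : HasDerivAt v (deriv v x) x := by
  have h := (hv.differentiableOn (by simp) x (Ioo_subset_Icc_self hx)).differentiableAt
    (Icc_mem_nhds hx.1 hx.2)
  exact h.hasDerivAt

lemma st14_contDiffOn_dv {v : ℝ → ℂ} (hv : ContDiffOn ℝ (⊤ : ℕ∞) v (Set.Icc 0 1)) :
    ContDiffOn ℝ (⊤ : ℕ∞) (deriv v) (Set.Ioo 0 1) :=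
  (hv.mono Ioo_subset_Icc_self).deriv_of_isOpen isOpen_Ioo (by simp)

lemma st14_hasDerivAt_dv {v : ℝ → ℂ} (hv : ContDiffOn ℝ (⊤ : ℕ∞) v (Set.Icc 0 1))
    {x : ℝ} (hx : x ∈ Set.Ioo (0:ℝ) 1) :
    HasDerivAt (deriv v) (deriv (deriv v) x) x := by
  have h := ((st14_contDiffOn_dv hv).differentiableOn (by simp) x hx).differentiableAt
    (isOpen_Ioo.mem_nhds hx)
  exact h.hasDerivAt

lemma st14_hasDerivAt_cpow (T t : ℝ) (ht : t < T) (μ : ℂ) :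
    HasDerivAt (fun s : ℝ => ((T - s : ℝ) : ℂ) ^ μ) (-μ * ((T - t : ℝ) : ℂ) ^ (μ - 1)) t := by
  have h0 : HasDerivAt (fun s : ℝ => T - s) (-1 : ℝ) t := by
    simpa using (hasDerivAt_id t).const_sub T
  have h1 : HasDerivAt (fun s : ℝ => ((T - s : ℝ) : ℂ)) (-1 : ℂ) t := by
    simpa using h0.ofReal_comp
  have hmem : ((T - t : ℝ) : ℂ) ∈ Complex.slitPlane := by
    rw [Complex.mem_slitPlane_iff]
    left
    simpa using sub_pos.mpr ht
  have hout : HasDerivAt (fun z : ℂ => z ^ μ) (μ * ((T - t : ℝ) : ℂ) ^ (μ - 1))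
      ((T - t : ℝ) : ℂ) := (Complex.hasStrictDerivAt_cpow_const hmem).hasDerivAt
  have hmid : HasDerivAt (fun y : ℝ => (y : ℂ) ^ μ) (μ * ((T - t : ℝ) : ℂ) ^ (μ - 1)) (T - t) :=
    hout.comp_ofReal
  have h2 : HasDerivAt (fun s : ℝ => ((T - s : ℝ) : ℂ) ^ μ)
      ((-1 : ℝ) • (μ * ((T - t : ℝ) : ℂ) ^ (μ - 1))) t := hmid.scomp t h0
  convert h2 using 1
  simp [Complex.real_smul]

lemma st14_hasDerivAt_inner (T t r : ℝ) (ht : t < T) :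
    HasDerivAt (fun s : ℝ => r / (T - s)) (r / (T - t) ^ 2) t := by
  have h0 : HasDerivAt (fun s : ℝ => T - s) (-1 : ℝ) t := by
    simpa using (hasDerivAt_id t).const_sub T
  have h1 := (h0.inv (sub_pos.mpr ht).ne').const_mul r
  refine h1.congr_deriv ?_
  ring

lemma st14_key_t (T t r : ℝ) (ht : t < T) (μ : ℂ) (f : ℝ → ℂ) (f' : ℂ)
    (hf : HasDerivAt f f' (r / (T - t))) :
    HasDerivAt (fun s => ((T - s : ℝ) : ℂ) ^ μ * f (r / (T - s)))
      (((T - t : ℝ) : ℂ) ^ (μ - 1) *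
        (-μ * f (r / (T - t)) + ((r / (T - t) : ℝ) : ℂ) * f')) t := by
  have hc : (0:ℝ) < T - t := sub_pos.mpr ht
  have h1 := st14_hasDerivAt_cpow T t ht μ
  have h2 : HasDerivAt (fun s : ℝ => f (r / (T - s))) ((r / (T - t) ^ 2) • f') t :=
    hf.scomp t (st14_hasDerivAt_inner T t r ht)
  have h3 := h1.mul h2
  refine h3.congr_deriv ?_
  have hne : ((T - t : ℝ) : ℂ) ≠ 0 := by
    exact_mod_cast hc.ne'
  have hsub : ((T - t : ℝ) : ℂ) ^ (μ - 1) = ((T - t : ℝ) : ℂ) ^ μ / ((T - t : ℝ) : ℂ) := by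
    rw [Complex.cpow_sub _ _ hne, Complex.cpow_one]
  rw [hsub]
  simp only [Complex.real_smul]
  push_cast
  have hne2 : ((T:ℂ) - t) ≠ 0 := by exact_mod_cast hne
  field_simp

lemma st14_key_r (T t r : ℝ) (ht : t < T) (μ : ℂ) (f : ℝ → ℂ) (f' : ℂ)
    (hf : HasDerivAt f f' (r / (T - t))) :
    HasDerivAt (fun y => ((T - t : ℝ) : ℂ) ^ μ * f (y / (T - t)))
      (((T - t : ℝ) : ℂ) ^ (μ - 1) * f') r := by
  have hc : (0:ℝ) < T - t := sub_pos.mpr ht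
  have h2 : HasDerivAt (fun y : ℝ => f (y / (T - t))) ((1 / (T - t)) • f') r := by
    have hi : HasDerivAt (fun y : ℝ => y / (T - t)) (1 / (T - t)) r := by
      simpa using (hasDerivAt_id r).div_const (T - t)
    exact hf.scomp r hi
  have h3 := h2.const_mul (((T - t : ℝ) : ℂ) ^ μ)
  refine h3.congr_deriv ?_
  have hne : ((T - t : ℝ) : ℂ) ≠ 0 := by exact_mod_cast hc.ne'
  rw [Complex.cpow_sub _ _ hne, Complex.cpow_one]
  simp only [Complex.real_smul]
  push_cast
  have hne2 : ((T:ℂ) - t) ≠ 0 := by exact_mod_cast hne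
  field_simp

section ChiDerivs

variable {T : ℝ} {lam : ℂ} {v : ℝ → ℂ}

lemma st14_rho_mem {T t r : ℝ} (hr : 0 < r) (hrt : r < T - t) :
    r / (T - t) ∈ Set.Ioo (0:ℝ) 1 := by
  have hc : (0:ℝ) < T - t := lt_trans hr hrt
  exact ⟨div_pos hr hc, (div_lt_one hc).mpr hrt⟩

lemma st14_tT {t r T : ℝ} (hr : 0 < r) (hrt : r < T - t) : t < T := by linarith

lemma st14_dchi_t (hv : ContDiffOn ℝ (⊤ : ℕ∞) v (Set.Icc 0 1))
    {t r : ℝ} (hr : 0 < r) (hrt : r < T - t) :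
    HasDerivAt (fun s => chiF T lam v s r)
      (((T - t : ℝ) : ℂ) ^ (-lam - 1) *
        (lam * v (r / (T - t)) + ((r / (T - t) : ℝ) : ℂ) * deriv v (r / (T - t)))) t := by
  have h := st14_key_t T t r (st14_tT hr hrt) (-lam) v (deriv v (r / (T - t)))
    (st14_hasDerivAt_v hv (st14_rho_mem hr hrt))
  simp only [chiF]
  convert h using 2
  ring

lemma st14_dchi_r (hv : ContDiffOn ℝ (⊤ : ℕ∞) v (Set.Icc 0 1))
    {t r : ℝ} (hr : 0 < r) (hrt : r < T - t) :
    HasDerivAt (fun y => chiF T lam v t y)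
      (((T - t : ℝ) : ℂ) ^ (-lam - 1) * deriv v (r / (T - t))) r := by
  have h := st14_key_r T t r (st14_tT hr hrt) (-lam) v (deriv v (r / (T - t)))
    (st14_hasDerivAt_v hv (st14_rho_mem hr hrt))
  simpa only [chiF] using h

lemma st14_d2chi_t (hv : ContDiffOn ℝ (⊤ : ℕ∞) v (Set.Icc 0 1))
    {t r : ℝ} (hr : 0 < r) (hrt : r < T - t) :
    deriv (fun s => deriv (fun s' => chiF T lam v s' r) s) t
      = ((T - t : ℝ) : ℂ) ^ (-lam - 2) *
        ((lam + 1) * (lam * v (r / (T - t)) + ((r / (T - t) : ℝ) : ℂ) * deriv v (r / (T - t)))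
          + ((r / (T - t) : ℝ) : ℂ) *
            (lam * deriv v (r / (T - t)) +
              (deriv v (r / (T - t)) +
                ((r / (T - t) : ℝ) : ℂ) * deriv (deriv v) (r / (T - t))))) := by
  set ρ : ℝ := r / (T - t) with hρdef
  have hρ : ρ ∈ Set.Ioo (0:ℝ) 1 := st14_rho_mem hr hrt
  have heq : (fun s => deriv (fun s' => chiF T lam v s' r) s)
      =ᶠ[nhds t] (fun s => ((T - s : ℝ) : ℂ) ^ (-lam - 1) *
        (lam * v (r / (T - s)) + ((r / (T - s) : ℝ) : ℂ) * deriv v (r / (T - s)))) := by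
    have hmem : Set.Iio (T - r) ∈ nhds t := Iio_mem_nhds (by linarith)
    filter_upwards [hmem] with s hs
    exact (st14_dchi_t hv hr (by simp only [Set.mem_Iio] at hs; linarith)).deriv
  rw [heq.deriv_eq]
  have hf : HasDerivAt (fun x : ℝ => lam * v x + (x : ℂ) * deriv v x)
      (lam * deriv v ρ + (deriv v ρ + (ρ : ℂ) * deriv (deriv v) ρ)) ρ := by
    have h1 := (st14_hasDerivAt_v hv hρ).const_mul lam
    have h2 : HasDerivAt (fun x : ℝ => (x : ℂ)) 1 ρ := by
      simpa using (hasDerivAt_id ρ).ofReal_comp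
    have h3 := h2.mul (st14_hasDerivAt_dv hv hρ)
    have := h1.add h3
    refine this.congr_deriv ?_
    ring
  have h := st14_key_t T t r (st14_tT hr hrt) (-lam - 1)
    (fun x : ℝ => lam * v x + (x : ℂ) * deriv v x) _ hf
  rw [h.deriv]
  have : -lam - 1 - 1 = -lam - 2 := by ring
  rw [this]
  ring

lemma st14_d2chi_r (hv : ContDiffOn ℝ (⊤ : ℕ∞) v (Set.Icc 0 1))
    {t r : ℝ} (hr : 0 < r) (hrt : r < T - t) :
    deriv (fun y => deriv (fun y' => chiF T lam v t y') y) r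
      = ((T - t : ℝ) : ℂ) ^ (-lam - 2) * deriv (deriv v) (r / (T - t)) := by
  have hc : (0:ℝ) < T - t := lt_trans hr hrt
  have heq : (fun y => deriv (fun y' => chiF T lam v t y') y)
      =ᶠ[nhds r] (fun y => ((T - t : ℝ) : ℂ) ^ (-lam - 1) * deriv v (y / (T - t))) := by
    have hmem : Set.Ioo (0:ℝ) (T - t) ∈ nhds r := Ioo_mem_nhds hr hrt
    filter_upwards [hmem] with y hy
    exact (st14_dchi_r hv hy.1 hy.2).deriv
  rw [heq.deriv_eq]
  have h := st14_key_r T t r (st14_tT hr hrt) (-lam - 1) (deriv v)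
    (deriv (deriv v) (r / (T - t))) (st14_hasDerivAt_dv hv (st14_rho_mem hr hrt))
  rw [h.deriv]
  have : -lam - 1 - 1 = -lam - 2 := by ring
  rw [this]

end ChiDerivs
lemma st14_ode_clear (ρ : ℝ) (hρ : ρ ∈ Set.Ioo (0:ℝ) 1) (lam V V1 V2 W : ℂ)
    (h : -(1 - (ρ:ℂ) ^ 2) * V2 - (2 * (1 - (ρ:ℂ) ^ 2) / (ρ:ℂ)) * V1
      + 2 * lam * (ρ:ℂ) * V1 + (W / (ρ:ℂ) ^ 2) * V + lam * (lam + 1) * V = 0) :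
    -(1 - (ρ:ℂ) ^ 2) * (ρ:ℂ) ^ 2 * V2 - 2 * (ρ:ℂ) * (1 - (ρ:ℂ) ^ 2) * V1
      + 2 * lam * (ρ:ℂ) ^ 3 * V1 + W * V + lam * (lam + 1) * (ρ:ℂ) ^ 2 * V = 0 := by
  have hρ0 : (ρ:ℂ) ≠ 0 := by exact_mod_cast hρ.1.ne'
  field_simp at h
  apply mul_left_cancel₀ hρ0
  rw [mul_zero]
  linear_combination (ρ:ℂ) * h

lemma st14_pde {T : ℝ} {lam : ℂ} {v : ℝ → ℂ}
    (hv : ContDiffOn ℝ (⊤ : ℕ∞) v (Set.Icc 0 1))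
    (hode : ∀ ρ ∈ Set.Ioo (0:ℝ) 1,
      -(1 - (ρ:ℂ) ^ 2) * deriv (deriv v) ρ
      - (2 * (1 - (ρ:ℂ) ^ 2) / (ρ:ℂ)) * deriv v ρ
      + 2 * lam * (ρ:ℂ) * deriv v ρ
      + (((Vdual ρ : ℝ) : ℂ) / (ρ:ℂ) ^ 2) * v ρ
      + lam * (lam + 1) * v ρ = 0)
    {t r : ℝ} (hr : 0 < r) (hrt : r < T - t) :
      deriv (fun s => deriv (fun s' => chiF T lam v s' r) s) t
      - deriv (fun y => deriv (fun y' => chiF T lam v t y') y) r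
      - ((2 / r : ℝ) : ℂ) * deriv (fun y => chiF T lam v t y) r
      + ((Vdual (r / (T - t)) / r ^ 2 : ℝ) : ℂ) * chiF T lam v t r = 0 := by
  have hc : (0:ℝ) < T - t := lt_trans hr hrt
  have hρ : r / (T - t) ∈ Set.Ioo (0:ℝ) 1 := st14_rho_mem hr hrt
  have hcne : ((T - t : ℝ) : ℂ) ≠ 0 := by exact_mod_cast hc.ne'
  have hρcne : ((r / (T - t) : ℝ) : ℂ) ≠ 0 := by exact_mod_cast hρ.1.ne'
  have e1 : ((T - t : ℝ) : ℂ) ^ (-lam - 1)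
      = ((T - t : ℝ) : ℂ) ^ (-lam - 2) * ((T - t : ℝ) : ℂ) := by
    rw [show (-lam - 1) = (-lam - 2) + 1 by ring, Complex.cpow_add _ _ hcne, Complex.cpow_one]
  have e2 : ((T - t : ℝ) : ℂ) ^ (-lam)
      = ((T - t : ℝ) : ℂ) ^ (-lam - 2) * ((T - t : ℝ) : ℂ) * ((T - t : ℝ) : ℂ) := by
    conv_lhs => rw [show (-lam) = (-lam - 2) + 1 + 1 by ring]
    rw [Complex.cpow_add _ _ hcne, Complex.cpow_add _ _ hcne, Complex.cpow_one]
  have habs := st14_ode_clear (r / (T - t)) hρ lam (v (r / (T - t)))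
    (deriv v (r / (T - t))) (deriv (deriv v) (r / (T - t))) ((Vdual (r / (T - t)) : ℝ) : ℂ)
    (hode _ hρ)
  have c1 : ((2 / r : ℝ) : ℂ) * ((T - t : ℝ) : ℂ) * ((r / (T - t) : ℝ) : ℂ) = 2 := by
    have : (2 / r) * (T - t) * (r / (T - t)) = 2 := by field_simp
    exact_mod_cast this
  have c2 : ((Vdual (r / (T - t)) / r ^ 2 : ℝ) : ℂ) * ((T - t : ℝ) : ℂ) ^ 2
      * ((r / (T - t) : ℝ) : ℂ) ^ 2 = ((Vdual (r / (T - t)) : ℝ) : ℂ) := by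
    have : (Vdual (r / (T - t)) / r ^ 2) * (T - t) ^ 2 * (r / (T - t)) ^ 2
        = Vdual (r / (T - t)) := by field_simp
    exact_mod_cast this
  rw [st14_d2chi_t hv hr hrt, st14_d2chi_r hv hr hrt, (st14_dchi_r hv hr hrt).deriv]
  simp only [chiF, e1, e2]
  have cancel : ∀ z : ℂ, ((r / (T - t) : ℝ) : ℂ) ^ 2 * z = 0 → z = 0 := by
    intro z hz
    rcases mul_eq_zero.mp hz with h | h
    · exact absurd h (pow_ne_zero 2 hρcne)
    · exact h
  apply cancel
  
  linear_combination ((T - t : ℝ) : ℂ) ^ (-lam - 2) * habs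
    - (((T - t : ℝ) : ℂ) ^ (-lam - 2) * deriv v (r / (T - t)) * ((r / (T - t) : ℝ) : ℂ)) * c1
    + (((T - t : ℝ) : ℂ) ^ (-lam - 2) * v (r / (T - t))) * c2

noncomputable def st14g (lam : ℂ) (v : ℝ → ℂ) (x : ℝ) : ℝ :=
  x ^ 2 * Complex.normSq (lam * v x + x * st14V1 v x)
    + x ^ 2 * Complex.normSq (st14V1 v x) + Vdual x * Complex.normSq (v x)

noncomputable def st14E (lam : ℂ) (v : ℝ → ℂ) : ℝ := (1/2) * ∫ x in (0:ℝ)..1, st14g lam v x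

/-- Twice the complex version of the primitive `B`, written with `deriv`. -/
noncomputable def st14BC (lam : ℂ) (v : ℝ → ℂ) (x : ℝ) : ℂ :=
  2 * (x:ℂ) * (x:ℂ) * ((lam * v x + (x:ℂ) * deriv v x) * star (deriv v x))
    - (x:ℂ) * (x:ℂ) * (x:ℂ) * ((lam * v x + (x:ℂ) * deriv v x) * star (lam * v x + (x:ℂ) * deriv v x)
        + deriv v x * star (deriv v x))
    - (x:ℂ) * ((Vdual x : ℝ) : ℂ) * (v x * star (v x))

/-- The primitive `B`, written with `derivWithin` for continuity up to the endpoints. -/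
noncomputable def st14B (lam : ℂ) (v : ℝ → ℂ) (x : ℝ) : ℝ :=
  x ^ 2 * ((lam * v x + x * st14V1 v x) * star (st14V1 v x)).re
    - x ^ 3 / 2 * (Complex.normSq (lam * v x + x * st14V1 v x) + Complex.normSq (st14V1 v x))
    - x * Vdual x / 2 * Complex.normSq (v x)

lemma st14B_eq {lam : ℂ} {v : ℝ → ℂ} {x : ℝ} (hx : x ∈ Set.Ioo (0:ℝ) 1) :
    st14B lam v x = (st14BC lam v x).re / 2 := by
  rw [st14B, st14BC, st14_V1_eq v hx]
  simp only [Complex.star_def, Complex.mul_conj, ← Complex.ofReal_pow]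
  simp only [Complex.sub_re, Complex.mul_re, Complex.add_re, Complex.add_im, Complex.mul_im,
    Complex.ofReal_re, Complex.ofReal_im, Complex.re_ofNat, Complex.im_ofNat,
    Complex.conj_re, Complex.conj_im]
  ring

lemma st14_hasDerivAt_B {lam : ℂ} {v : ℝ → ℂ}
    (hv : ContDiffOn ℝ (⊤ : ℕ∞) v (Set.Icc 0 1))
    (hode : ∀ ρ ∈ Set.Ioo (0:ℝ) 1,
      -(1 - (ρ:ℂ) ^ 2) * deriv (deriv v) ρ
      - (2 * (1 - (ρ:ℂ) ^ 2) / (ρ:ℂ)) * deriv v ρ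
      + 2 * lam * (ρ:ℂ) * deriv v ρ
      + (((Vdual ρ : ℝ) : ℂ) / (ρ:ℂ) ^ 2) * v ρ
      + lam * (lam + 1) * v ρ = 0)
    {x : ℝ} (hx : x ∈ Set.Ioo (0:ℝ) 1) :
    HasDerivAt (st14B lam v)
      ((lam.re - 1/2) * st14g lam v x + 8 * x ^ 2 / (1 + x ^ 2) ^ 2 * Complex.normSq (v x)) x := by
  have hV := st14_hasDerivAt_v hv hx
  have hV1 := st14_hasDerivAt_dv hv hx
  have hid : HasDerivAt (fun y : ℝ => (y : ℂ)) 1 x := by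
    simpa using (hasDerivAt_id x).ofReal_comp
  have hw : HasDerivAt (fun y : ℝ => lam * v y + (y : ℂ) * deriv v y)
      (lam * deriv v x + (1 * deriv v x + (x : ℂ) * deriv (deriv v) x)) x :=
    (hV.const_mul lam).add (hid.mul hV1)
  have hVd : HasDerivAt (fun y : ℝ => ((Vdual y : ℝ) : ℂ)) ((-16 * x / (1 + x ^ 2) ^ 2 : ℝ) : ℂ) x :=
    (st14_vdual_hasDerivAt x).ofReal_comp
  have t1 := ((HasDerivAt.const_mul (2:ℂ) hid).mul hid).mul (hw.mul hV1.star)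
  have t2 := ((hid.mul hid).mul hid).mul ((hw.mul hw.star).add (hV1.mul hV1.star))
  have t3 := (hid.mul hVd).mul (hV.mul hV.star)
  have hBC := (t1.sub t2).sub t3
  change HasDerivAt (st14BC lam v) _ x at hBC
  have hB2 := (Complex.reCLM.hasFDerivAt.comp_hasDerivAt x hBC).div_const 2
  have heq : st14B lam v =ᶠ[nhds x] fun y => Complex.reCLM (st14BC lam v y) / 2 := by
    filter_upwards [isOpen_Ioo.mem_nhds hx] with y hy
    simpa using st14B_eq (lam := lam) (v := v) hy
  have hB4 := hB2.congr_of_eventuallyEq heq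
  refine hB4.congr_deriv ?_
  symm
  rw [st14g, st14_V1_eq v hx]
  have habs := st14_ode_clear x hx lam (v x) (deriv v x) (deriv (deriv v) x)
    ((Vdual x : ℝ) : ℂ) (hode x hx)
  have h1 := congrArg Complex.re habs
  have h2 := congrArg Complex.im habs
  simp only [Complex.star_def, map_add, map_mul, Complex.conj_ofReal, ← Complex.ofReal_pow,
    Complex.add_re, Complex.add_im, Complex.sub_re, Complex.sub_im, Complex.mul_re,
    Complex.mul_im, Complex.neg_re, Complex.neg_im, Complex.one_re, Complex.one_im,
    Complex.ofReal_re, Complex.ofReal_im, Complex.re_ofNat, Complex.im_ofNat,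
    Complex.conj_re, Complex.conj_im, Complex.normSq_apply, Complex.zero_re, Complex.zero_im,
    Complex.reCLM_apply, smul_eq_mul, Pi.mul_apply, Pi.add_apply] at h1 h2 ⊢
  linear_combination (lam.re * (v x).re - lam.im * (v x).im + x * (deriv v x).re) * h1
    + (lam.re * (v x).im + lam.im * (v x).re + x * (deriv v x).im) * h2

lemma st14_contB {lam : ℂ} {v : ℝ → ℂ} (hv : ContDiffOn ℝ (⊤ : ℕ∞) v (Set.Icc 0 1)) :
    ContinuousOn (st14B lam v) (Set.Icc 0 1) := by
  have hc1 : ContinuousOn v (Set.Icc 0 1) := hv.continuousOn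
  have hc2 := st14_contV1 hv
  have hw : ContinuousOn (fun x : ℝ => lam * v x + (x:ℂ) * st14V1 v x) (Set.Icc 0 1) :=
    (continuousOn_const.mul hc1).add (Complex.continuous_ofReal.continuousOn.mul hc2)
  unfold st14B
  apply ContinuousOn.sub
  apply ContinuousOn.sub
  · exact (continuousOn_pow 2).mul
      (Complex.continuous_re.comp_continuousOn (hw.mul (continuous_star.comp_continuousOn hc2)))
  · exact ((continuousOn_pow 3).div_const 2).mul
      ((Complex.continuous_normSq.comp_continuousOn hw).add
        (Complex.continuous_normSq.comp_continuousOn hc2))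
  · exact ((continuousOn_id.mul st14_vdual_cont.continuousOn).div_const 2).mul
      (Complex.continuous_normSq.comp_continuousOn hc1)

lemma st14_contg {lam : ℂ} {v : ℝ → ℂ} (hv : ContDiffOn ℝ (⊤ : ℕ∞) v (Set.Icc 0 1)) :
    ContinuousOn (st14g lam v) (Set.Icc 0 1) := by
  have hc1 : ContinuousOn v (Set.Icc 0 1) := hv.continuousOn
  have hc2 := st14_contV1 hv
  have hw : ContinuousOn (fun x : ℝ => lam * v x + (x:ℂ) * st14V1 v x) (Set.Icc 0 1) :=
    (continuousOn_const.mul hc1).add (Complex.continuous_ofReal.continuousOn.mul hc2)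
  unfold st14g
  apply ContinuousOn.add
  apply ContinuousOn.add
  · exact (continuousOn_pow 2).mul (Complex.continuous_normSq.comp_continuousOn hw)
  · exact (continuousOn_pow 2).mul (Complex.continuous_normSq.comp_continuousOn hc2)
  · exact st14_vdual_cont.continuousOn.mul (Complex.continuous_normSq.comp_continuousOn hc1)

lemma st14_B_zero {lam : ℂ} {v : ℝ → ℂ} : st14B lam v 0 = 0 := by
  simp [st14B]

lemma st14_B_one_le {lam : ℂ} {v : ℝ → ℂ} : st14B lam v 1 ≤ -Complex.normSq (v 1) := by
  have h1 : st14B lam v 1 = ((lam * v 1 + st14V1 v 1) * star (st14V1 v 1)).re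
      - 1 / 2 * (Complex.normSq (lam * v 1 + st14V1 v 1) + Complex.normSq (st14V1 v 1))
      - Complex.normSq (v 1) := by
    simp [st14B, st14_vdual_one]
  rw [h1]
  set w := lam * v 1 + st14V1 v 1
  set u := st14V1 v 1
  simp only [Complex.star_def, Complex.mul_re, Complex.conj_re, Complex.conj_im,
    Complex.normSq_apply]
  nlinarith [sq_nonneg (w.re - u.re), sq_nonneg (w.im - u.im)]

lemma st14_cont8 : Continuous (fun x : ℝ => 8 * x ^ 2 / (1 + x ^ 2) ^ 2) := by
  apply Continuous.div (by continuity) (by continuity)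
  intro x
  positivity

lemma st14_key_ineq {lam : ℂ} {v : ℝ → ℂ}
    (hv : ContDiffOn ℝ (⊤ : ℕ∞) v (Set.Icc 0 1))
    (hode : ∀ ρ ∈ Set.Ioo (0:ℝ) 1,
      -(1 - (ρ:ℂ) ^ 2) * deriv (deriv v) ρ
      - (2 * (1 - (ρ:ℂ) ^ 2) / (ρ:ℂ)) * deriv v ρ
      + 2 * lam * (ρ:ℂ) * deriv v ρ
      + (((Vdual ρ : ℝ) : ℂ) / (ρ:ℂ) ^ 2) * v ρ
      + lam * (lam + 1) * v ρ = 0) :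
    (2 * lam.re - 1) * st14E lam v ≤ -Complex.normSq (v 1) := by
  have hint1 : IntervalIntegrable (fun x => (lam.re - 1/2) * st14g lam v x) MeasureTheory.volume 0 1 :=
    (((st14_contg hv).const_smul (lam.re - 1/2)).mono (by rw [Set.uIcc_of_le zero_le_one])).intervalIntegrable
  have hint2 : IntervalIntegrable (fun x : ℝ => 8 * x ^ 2 / (1 + x ^ 2) ^ 2 * Complex.normSq (v x))
      MeasureTheory.volume 0 1 :=
    ((st14_cont8.continuousOn.mul
      (Complex.continuous_normSq.comp_continuousOn hv.continuousOn)).mono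
        (by rw [Set.uIcc_of_le zero_le_one])).intervalIntegrable
  have hftc : (∫ x in (0:ℝ)..1, ((lam.re - 1/2) * st14g lam v x
      + 8 * x ^ 2 / (1 + x ^ 2) ^ 2 * Complex.normSq (v x)))
      = st14B lam v 1 - st14B lam v 0 := by
    refine intervalIntegral.integral_eq_sub_of_hasDeriv_right_of_le zero_le_one
      (st14_contB hv)
      (fun x hx => (st14_hasDerivAt_B hv hode hx).hasDerivWithinAt)
      (hint1.add hint2)
  rw [intervalIntegral.integral_add hint1 hint2, intervalIntegral.integral_const_mul,
    st14_B_zero, sub_zero] at hftc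
  have hQ : 0 ≤ ∫ x in (0:ℝ)..1, 8 * x ^ 2 / (1 + x ^ 2) ^ 2 * Complex.normSq (v x) := by
    apply intervalIntegral.integral_nonneg zero_le_one
    intro x _
    have := Complex.normSq_nonneg (v x)
    positivity
  have hE : (2 * lam.re - 1) * st14E lam v = (lam.re - 1/2) * ∫ x in (0:ℝ)..1, st14g lam v x := by
    rw [st14E]; ring
  have hBle := st14_B_one_le (lam := lam) (v := v)
  linarith

lemma st14_norm_cpow_mul_sq {c : ℝ} (hc : 0 < c) (μ : ℂ) (z : ℂ) :
    ‖((c : ℝ) : ℂ) ^ μ * z‖ ^ 2 = c ^ (2 * μ.re) * Complex.normSq z := by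
  rw [norm_mul, mul_pow, Complex.norm_cpow_eq_rpow_re_of_pos hc]
  rw [← Complex.normSq_eq_norm_sq]
  congr 1
  rw [← Real.rpow_natCast (c ^ μ.re) 2, ← Real.rpow_mul hc.le]
  norm_num [mul_comm]

lemma st14_integrand_eq {T : ℝ} {lam : ℂ} {v : ℝ → ℂ}
    (hv : ContDiffOn ℝ (⊤ : ℕ∞) v (Set.Icc 0 1))
    {t r : ℝ} (hr : 0 < r) (hrt : r < T - t) :
    r ^ 2 * ‖deriv (fun s => chiF T lam v s r) t‖ ^ 2
      + r ^ 2 * ‖deriv (fun y => chiF T lam v t y) r‖ ^ 2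
      + Vdual (r / (T - t)) * ‖chiF T lam v t r‖ ^ 2
    = (T - t) ^ (-2 * lam.re) * st14g lam v (r / (T - t)) := by
  have hc : (0:ℝ) < T - t := lt_trans hr hrt
  have hρ := st14_rho_mem hr hrt
  rw [(st14_dchi_t hv hr hrt).deriv, (st14_dchi_r hv hr hrt).deriv]
  show _ + _ + Vdual (r / (T-t)) * ‖((T - t : ℝ) : ℂ) ^ (-lam) * v (r / (T - t))‖ ^ 2 = _
  rw [st14_norm_cpow_mul_sq hc, st14_norm_cpow_mul_sq hc, st14_norm_cpow_mul_sq hc]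
  rw [st14g, st14_V1_eq v hρ]
  have e1 : (2 * (-lam - 1).re) = (-2 * lam.re) + (-2) := by
    simp [Complex.sub_re]
    ring
  have e2 : (2 * (-lam).re) = (-2 * lam.re) := by
    simp
    
  rw [e1, e2, Real.rpow_add hc]
  have e3 : (T - t) ^ (-2 : ℝ) = ((T - t) ^ 2)⁻¹ := by
    rw [show (-2 : ℝ) = -((2:ℕ):ℝ) by norm_num, Real.rpow_neg hc.le, Real.rpow_natCast]
  rw [e3]
  have hρc : (r / (T - t)) ^ 2 = r ^ 2 * ((T - t) ^ 2)⁻¹ := by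
    field_simp
  rw [hρc]
  push_cast
  ring

lemma st14_Ffun_eq {T : ℝ} {lam : ℂ} {v : ℝ → ℂ}
    (hv : ContDiffOn ℝ (⊤ : ℕ∞) v (Set.Icc 0 1))
    {t : ℝ} (ht : t ∈ Set.Ioo (0:ℝ) T) :
    Ffun T lam v t = (T - t) ^ (1 + -2 * lam.re) * st14E lam v := by
  have hc : (0:ℝ) < T - t := sub_pos.mpr ht.2
  have h1 : (∫ r in (0:ℝ)..(T - t),
      (r ^ 2 * ‖deriv (fun s => chiF T lam v s r) t‖ ^ 2
        + r ^ 2 * ‖deriv (fun y => chiF T lam v t y) r‖ ^ 2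
        + Vdual (r / (T - t)) * ‖chiF T lam v t r‖ ^ 2))
      = ∫ r in (0:ℝ)..(T - t), (T - t) ^ (-2 * lam.re) * st14g lam v (r / (T - t)) := by
    apply intervalIntegral.integral_congr_ae
    have hae : ∀ᵐ r ∂MeasureTheory.volume, r ≠ T - t := by
      rw [MeasureTheory.ae_iff]
      simpa using Real.volume_singleton
    filter_upwards [hae] with r hne hmem
    rw [Set.uIoc_of_le hc.le] at hmem
    exact st14_integrand_eq hv hmem.1 (lt_of_le_of_ne hmem.2 hne)
  rw [Ffun, h1, intervalIntegral.integral_const_mul]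
  have h2 : (∫ r in (0:ℝ)..(T - t), st14g lam v (r / (T - t)))
      = (T - t) * ∫ x in (0:ℝ)..1, st14g lam v x := by
    have h3 := intervalIntegral.inv_mul_integral_comp_div (f := st14g lam v) (a := (0:ℝ))
      (b := T - t) (c := T - t)
    rw [zero_div, div_self hc.ne'] at h3
    rw [← h3]
    field_simp
  rw [h2, st14E, Real.rpow_add hc, Real.rpow_one]
  ring

/-- if `v ∈ C^∞[0,1]` solves the dual eigenvalue equation and `v(ρ)/ρ²`
extends continuously to `[0,1]`, then `χ(t,r) = (T−t)^{−λ}v(r/(T−t))` solves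
`χ_tt − χ_rr − (2/r)χ_r + Ṽ(r/(T−t)) r^{-2} χ = 0` in the backward lightcone, and the
functional `F` satisfies `F'(t) ≤ −|χ(t,T−t)|² = −(T−t)^{−2Reλ}|v(1)|²` on `(0,T)`. -/
theorem stmt_14 (T : ℝ) (hT : 0 < T) (lam : ℂ) (v : ℝ → ℂ)
    (hv : ContDiffOn ℝ (⊤ : ℕ∞) v (Set.Icc 0 1))
    (hode : ∀ ρ ∈ Set.Ioo (0:ℝ) 1,
      -(1 - (ρ:ℂ) ^ 2) * deriv (deriv v) ρ
      - (2 * (1 - (ρ:ℂ) ^ 2) / (ρ:ℂ)) * deriv v ρ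
      + 2 * lam * (ρ:ℂ) * deriv v ρ
      + (((Vdual ρ : ℝ) : ℂ) / (ρ:ℂ) ^ 2) * v ρ
      + lam * (lam + 1) * v ρ = 0)
    (hext : ∃ w : ℝ → ℂ, ContinuousOn w (Set.Icc 0 1) ∧
      ∀ ρ ∈ Set.Ioc (0:ℝ) 1, w ρ = v ρ / (ρ:ℂ) ^ 2) :
    (∀ t r : ℝ, 0 < t → t < T → 0 < r → r < T - t →
      deriv (fun s => deriv (fun s' => chiF T lam v s' r) s) t
      - deriv (fun y => deriv (fun y' => chiF T lam v t y') y) r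
      - ((2 / r : ℝ) : ℂ) * deriv (fun y => chiF T lam v t y) r
      + ((Vdual (r / (T - t)) / r ^ 2 : ℝ) : ℂ) * chiF T lam v t r = 0) ∧
    (∀ t ∈ Set.Ioo (0:ℝ) T,
      deriv (Ffun T lam v) t ≤ -‖chiF T lam v t (T - t)‖ ^ 2 ∧
      ‖chiF T lam v t (T - t)‖ ^ 2 = (T - t) ^ (-(2 : ℝ) * lam.re) * ‖v 1‖ ^ 2) := by
  constructor
  · intro t r _ _ hr hrt
    exact st14_pde hv hode hr hrt
  · intro t ht
    have hc : (0:ℝ) < T - t := sub_pos.mpr ht.2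
    have hchi : ‖chiF T lam v t (T - t)‖ ^ 2 = (T - t) ^ (-(2:ℝ) * lam.re) * ‖v 1‖ ^ 2 := by
      rw [chiF, div_self hc.ne', st14_norm_cpow_mul_sq hc]
      have e2 : (2 * (-lam).re) = (-2 * lam.re) := by simp
      rw [e2]
      congr 1
      rw [Complex.normSq_eq_norm_sq]
    refine ⟨?_, hchi⟩
    have heq : Ffun T lam v =ᶠ[nhds t]
        fun s => (T - s) ^ (1 + -2 * lam.re) * st14E lam v := by
      filter_upwards [isOpen_Ioo.mem_nhds ht] with s hs
      exact st14_Ffun_eq hv hs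
    have hin : HasDerivAt (fun s : ℝ => T - s) (-1 : ℝ) t := by
      simpa using (hasDerivAt_id t).const_sub T
    have hout := Real.hasDerivAt_rpow_const (x := T - t) (p := 1 + -2 * lam.re) (Or.inl hc.ne')
    have hD : HasDerivAt (fun s : ℝ => (T - s) ^ (1 + -2 * lam.re) * st14E lam v)
        ((1 + -2 * lam.re) * (T - t) ^ (1 + -2 * lam.re - 1) * -1 * st14E lam v) t := by
      simpa [Function.comp_def] using (hout.comp t hin).mul_const (st14E lam v)
    rw [heq.deriv_eq, hD.deriv, hchi]
    have hkey := st14_key_ineq hv hode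
    have hpos : (0:ℝ) < (T - t) ^ (-2 * lam.re) := Real.rpow_pos_of_pos hc _
    have he : (1 + -2 * lam.re - 1) = (-2 * lam.re) := by ring
    rw [he]
    have hnq : ‖v 1‖ ^ 2 = Complex.normSq (v 1) := by
      rw [Complex.normSq_eq_norm_sq]
    rw [hnq]
    have h2 : (1 + -2 * lam.re) * (T - t) ^ (-2 * lam.re) * -1 * st14E lam v
        = (T - t) ^ (-2 * lam.re) * ((2 * lam.re - 1) * st14E lam v) := by ring
    have h3 : -((T - t) ^ (-(2:ℝ) * lam.re) * Complex.normSq (v 1))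
        = (T - t) ^ (-2 * lam.re) * (-Complex.normSq (v 1)) := by ring
    rw [h2, h3]
    exact mul_le_mul_of_nonneg_left hkey hpos.le
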